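/- In the three-node, three-label instance with edges (u,v), (v,w), (u,w) all of weight 5 and node costs c(u,1)=∞ (or a sufficiently large constant), c(v,3)=8, c(w,2)=∞, all other costs 0, the unique optimal integer labeling assigns label 3 to all three nodes with objective 8, while the fractional LP solution ū=(0,1/2,1/2), v̄=(1/2,1/2,0), w̄=(1/2,0,1/2) is feasible with objective 7.5 < 8; hence the LP relaxation is not tight on this instance. -/

import Mathlib

open Finset

variable {V L : Type*}

/-- `x` is a probability vector over the labels `L`. -/
def IsProbVec [Fintype L] (x : L → ℝ) : Prop :=
  (∀ i, 0 ≤ x i) ∧ ∑ i, x i = 1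

/-- Half the ℓ₁ distance between two label vectors. -/
noncomputable def dL1 [Fintype L] (x y : L → ℝ) : ℝ :=
  (1 / 2) * ∑ i, |x i - y i|

/-- The LP relaxation objective of Uniform Metric Labeling. -/
noncomputable def QLP [Fintype V] [Fintype L] (E : Finset (V × V))
    (c : V → L → ℝ) (w : V × V → ℝ) (μ : V → L → ℝ) : ℝ :=
  ∑ u, ∑ i, c u i * μ u i + ∑ e ∈ E, w e * dL1 (μ e.1) (μ e.2)

/-- The Uniform Metric Labeling objective. -/
def Q [Fintype V] [DecidableEq L] (E : Finset (V × V)) (c : V → L → ℝ)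
    (w : V × V → ℝ) (g : V → L) : ℝ :=
  ∑ u, c u (g u) + ∑ e ∈ E.filter (fun e => g e.1 ≠ g e.2), w e

/-- The integer LP solution corresponding to a labeling `f`. -/
def toVec [DecidableEq L] (f : V → L) : V → L → ℝ :=
  fun u i => if f u = i then 1 else 0

/-- The three-node triangle counterexample: a `(1,2)`-stable instance on which the
LP relaxation is fractional. The unique optimum labels everything `3` (index `2`)
with objective `8`, while the given fractional LP solution is feasible with
objective `7.5 < 8`. -/
theorem lp_not_tight_counterexample (M : ℝ) (hM : M > 100) :
    let E : Finset (Fin 3 × Fin 3) := {(0, 1), (1, 2), (0, 2)}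
    let w : Fin 3 × Fin 3 → ℝ := fun _ => 5
    let c : Fin 3 → Fin 3 → ℝ := fun u i =>
      if u = 0 ∧ i = 0 then M else if u = 1 ∧ i = 2 then 8 else
      if u = 2 ∧ i = 1 then M else 0
    let g : Fin 3 → Fin 3 := fun _ => 2
    let μ : Fin 3 → Fin 3 → ℝ := ![![0, 1/2, 1/2], ![1/2, 1/2, 0], ![1/2, 0, 1/2]]
    (∀ h : Fin 3 → Fin 3, h ≠ g → Q E c w g < Q E c w h) ∧
    Q E c w g = 8 ∧
    (∀ u, IsProbVec (μ u)) ∧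
    QLP E c w μ = 7.5 ∧
    QLP E c w μ < Q E c w g := by
  intro E w c g μ
  have hfin : ∀ x : Fin 3, x = 0 ∨ x = 1 ∨ x = 2 := by decide
  have m00 : μ 0 0 = 0 := rfl
  have m01 : μ 0 1 = 1/2 := rfl
  have m02 : μ 0 2 = 1/2 := rfl
  have m10 : μ 1 0 = 1/2 := rfl
  have m11 : μ 1 1 = 1/2 := rfl
  have m12 : μ 1 2 = 0 := rfl
  have m20 : μ 2 0 = 1/2 := rfl
  have m21 : μ 2 1 = 0 := rfl
  have m22 : μ 2 2 = 1/2 := rfl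
  have hQ : ∀ h : Fin 3 → Fin 3, Q E c w h =
      c 0 (h 0) + c 1 (h 1) + c 2 (h 2)
      + ((if h 0 ≠ h 1 then (5:ℝ) else 0) + ((if h 1 ≠ h 2 then (5:ℝ) else 0)
      + (if h 0 ≠ h 2 then (5:ℝ) else 0))) := by
    intro h
    have hE : E = insert (0,1) (insert (1,2) {(0,2)}) := rfl
    rw [Q, Fin.sum_univ_three, hE, Finset.sum_filter, Finset.sum_insert (by decide),
      Finset.sum_insert (by decide), Finset.sum_singleton]
  have hQg : Q E c w g = 8 := by
    rw [hQ]; simp only [c, g]; norm_num [Fin.ext_iff]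
  have hQLP : QLP E c w μ = 7.5 := by
    have hE : E = insert (0,1) (insert (1,2) {(0,2)}) := rfl
    rw [QLP, hE, Finset.sum_insert (by decide), Finset.sum_insert (by decide),
      Finset.sum_singleton]
    simp only [dL1, Fin.sum_univ_three]
    simp only [m00, m01, m02, m10, m11, m12, m20, m21, m22]
    simp only [c]; norm_num [Fin.ext_iff, abs_of_nonneg, abs_of_nonpos]
  refine ⟨?_, hQg, ?_, hQLP, by rw [hQg, hQLP]; norm_num⟩
  · intro h hne
    have hne' : ¬(h 0 = 2 ∧ h 1 = 2 ∧ h 2 = 2) := by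
      rintro ⟨a, b, c'⟩
      exact hne (funext fun x => by
        rcases hfin x with hx | hx | hx <;> rw [hx] <;> assumption)
    rw [hQg, hQ]
    rcases hfin (h 0) with h0 | h0 | h0 <;> rcases hfin (h 1) with h1 | h1 | h1 <;>
      rcases hfin (h 2) with h2 | h2 | h2 <;>
      first
      | (rw [h0, h1, h2]
         simp only [c]; norm_num [Fin.ext_iff] <;> linarith)
      | exact absurd ⟨h0, h1, h2⟩ hne'
  · intro u
    refine ⟨fun i => ?_, ?_⟩
    · rcases hfin u with hu | hu | hu <;> rcases hfin i with hi | hi | hi <;>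
        rw [hu, hi] <;>
        simp only [m00, m01, m02, m10, m11, m12, m20, m21, m22] <;> norm_num
    · rcases hfin u with hu | hu | hu <;> rw [hu, Fin.sum_univ_three] <;>
        simp only [m00, m01, m02, m10, m11, m12, m20, m21, m22] <;> norm_num
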